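/- arXiv:1303.4268 — 3 statements merged into one kernel-verified Lean document; each statement's English description precedes it below -/
import Mathlib

section
/- Fix a constant a > 0 and set h(τ) = a·√τ. Then for every real u with |u| < a/√β_t, the quantity h(τ)·G_τ(u/h(τ)) is well defined (all logarithms are taken at nonzero arguments and 1 − 2β_t·B(u/h(τ),τ) ≠ 0) for all sufficiently small τ > 0, and lim_{τ→0+} h(τ)·G_τ(u/h(τ)) = 0. -/
open Filter Topology Asymptotics MeasureTheory

set_option linter.unusedVariables false
set_option maxHeartbeats 1000000

noncomputable section


/-- sign convention of the paper: 1 if `0 ≤ x`, -1 otherwise. -/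
def sgn' (x : ℝ) : ℝ := if 0 ≤ x then 1 else -1

/-- principal-branch complex square root `d` of the Heston Riccati discriminant. -/
def hestD (κ ρ ξ : ℝ) (w : ℂ) : ℂ :=
  (((κ : ℂ) - (ρ : ℂ) * (ξ : ℂ) * w) ^ 2 + w * (1 - w) * (ξ : ℂ) ^ 2) ^ ((1 : ℂ) / 2)

def hestGamma (κ ρ ξ : ℝ) (w : ℂ) : ℂ :=
  ((κ : ℂ) - (ρ : ℂ) * (ξ : ℂ) * w - hestD κ ρ ξ w) /
    ((κ : ℂ) - (ρ : ℂ) * (ξ : ℂ) * w + hestD κ ρ ξ w)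

def hestB (κ ρ ξ : ℝ) (w : ℂ) (τ : ℝ) : ℂ :=
  (((κ : ℂ) - (ρ : ℂ) * (ξ : ℂ) * w - hestD κ ρ ξ w) / (ξ : ℂ) ^ 2) *
    ((1 - Complex.exp (-(hestD κ ρ ξ w) * (τ : ℂ))) /
      (1 - hestGamma κ ρ ξ w * Complex.exp (-(hestD κ ρ ξ w) * (τ : ℂ))))

def hestA (κ θ ρ ξ : ℝ) (w : ℂ) (τ : ℝ) : ℂ :=
  ((κ * θ / ξ ^ 2 : ℝ) : ℂ) *
    (((κ : ℂ) - (ρ : ℂ) * (ξ : ℂ) * w - hestD κ ρ ξ w) * (τ : ℂ) -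
      2 * Complex.log ((1 - hestGamma κ ρ ξ w * Complex.exp (-(hestD κ ρ ξ w) * (τ : ℂ))) /
        (1 - hestGamma κ ρ ξ w)))

def betaT (κ ξ t : ℝ) : ℝ := ξ ^ 2 * (1 - Real.exp (-(κ * t))) / (4 * κ)

/-- explicit Heston forward log-mgf `G_τ(w)`. -/
def hestG (κ θ ξ v ρ t : ℝ) (w : ℂ) (τ : ℝ) : ℂ :=
  hestA κ θ ρ ξ w τ +
    hestB κ ρ ξ w τ * (v : ℂ) * ((Real.exp (-(κ * t)) : ℝ) : ℂ) /
      (1 - 2 * (betaT κ ξ t : ℂ) * hestB κ ρ ξ w τ) -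
    ((2 * κ * θ / ξ ^ 2 : ℝ) : ℂ) *
      Complex.log (1 - 2 * (betaT κ ξ t : ℂ) * hestB κ ρ ξ w τ)

/-- rescaled forward log-mgf, for complex argument. -/
def hestLambdaC (κ θ ξ v ρ t τ : ℝ) (z : ℂ) : ℂ :=
  ((Real.sqrt τ : ℝ) : ℂ) * hestG κ θ ξ v ρ t (z / ((Real.sqrt τ : ℝ) : ℂ)) τ

/-- rescaled forward log-mgf `Λ_τ(u) = √τ · G_τ(u/√τ)`. -/
def hestLambda (κ θ ξ v ρ t τ : ℝ) (u : ℝ) : ℂ :=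
  hestLambdaC κ θ ξ v ρ t τ (u : ℂ)

/-- `D_{t,τ}`: the maximal open interval containing `0` on which `Λ_τ` is real-valued. -/
def hestDom (κ θ ξ v ρ t τ : ℝ) : Set ℝ :=
  connectedComponentIn (interior {u : ℝ | (hestLambda κ θ ξ v ρ t τ u).im = 0}) 0


lemma sq_cpow_half (z : ℂ) : (z ^ ((1:ℂ)/2))^2 = z := by
  rcases eq_or_ne z 0 with h|h
  · simp [h, Complex.zero_cpow (by norm_num : (1:ℂ)/2 ≠ 0)]
  · rw [sq, ← Complex.cpow_add _ _ h]; norm_num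

lemma cpow_half_of_neg {x : ℝ} (hx : x < 0) :
    (x:ℂ) ^ ((1:ℂ)/2) = Complex.I * ((Real.sqrt (-x) : ℝ) : ℂ) := by
  rw [show ((1:ℂ)/2) = (((1/2:ℝ)):ℂ) by norm_num]
  rw [Complex.ofReal_cpow_of_nonpos hx.le]
  rw [show (-(x:ℂ)) = (((-x):ℝ):ℂ) by push_cast; ring]
  rw [← Complex.ofReal_cpow (by linarith : (0:ℝ) ≤ -x) (1/2)]
  rw [← Real.sqrt_eq_rpow]
  rw [show (Real.pi : ℂ) * Complex.I * (((1/2:ℝ)):ℂ) = (Real.pi/2 : ℝ) * Complex.I by push_cast; ring]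
  rw [Complex.exp_mul_I]
  simp [Real.cos_pi_div_two, Real.sin_pi_div_two]
  ring

lemma cpow_half_of_nonneg {x : ℝ} (hx : 0 ≤ x) :
    (x:ℂ) ^ ((1:ℂ)/2) = ((Real.sqrt x : ℝ) : ℂ) := by
  rw [show ((1:ℂ)/2) = (((1/2:ℝ)):ℂ) by norm_num, ← Complex.ofReal_cpow hx, ← Real.sqrt_eq_rpow]

lemma tendsto_expFactor :
    Tendsto (fun z : ℂ => (1 - Complex.exp (-z)) / z) (𝓝[≠] (0:ℂ)) (𝓝 1) := by
  have h := Complex.hasDerivAt_exp 0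
  rw [Complex.exp_zero] at h
  have hs := hasDerivAt_iff_tendsto_slope.mp h
  have hneg : Tendsto (fun z : ℂ => -z) (𝓝[≠] (0:ℂ)) (𝓝[≠] (0:ℂ)) := by
    rw [tendsto_nhdsWithin_iff]
    constructor
    · exact (continuous_neg.tendsto' 0 0 (by simp)).mono_left nhdsWithin_le_nhds
    · filter_upwards [self_mem_nhdsWithin] with z hz
      simpa using hz
  have := hs.comp hneg
  refine this.congr fun z => ?_
  simp [slope, Complex.exp_zero]
  ring

theorem stmt0 (κ θ ξ v ρ t : ℝ) (hκ : 0 < κ) (hθ : 0 < θ) (hξ : 0 < ξ)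
    (hv : 0 < v) (hρ : ρ ∈ Set.Ioo (-1 : ℝ) 1) (ht : 0 < t)
    (a : ℝ) (ha : 0 < a) (u : ℝ) (hu : |u| < a / Real.sqrt (betaT κ ξ t)) :
    (∀ᶠ τ in 𝓝[>] (0 : ℝ),
      ((1 - hestGamma κ ρ ξ ((u : ℂ) / ((a * Real.sqrt τ : ℝ) : ℂ)) *
            Complex.exp (-(hestD κ ρ ξ ((u : ℂ) / ((a * Real.sqrt τ : ℝ) : ℂ))) * (τ : ℂ))) /
          (1 - hestGamma κ ρ ξ ((u : ℂ) / ((a * Real.sqrt τ : ℝ) : ℂ)))) ≠ 0 ∧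
      (1 - 2 * (betaT κ ξ t : ℂ) * hestB κ ρ ξ ((u : ℂ) / ((a * Real.sqrt τ : ℝ) : ℂ)) τ) ≠ 0) ∧
    Tendsto (fun τ : ℝ => ((a * Real.sqrt τ : ℝ) : ℂ) *
        hestG κ θ ξ v ρ t ((u : ℂ) / ((a * Real.sqrt τ : ℝ) : ℂ)) τ)
      (𝓝[>] (0 : ℝ)) (𝓝 0) := by
  by_cases hu0 : u = 0
  · -- easy case: w = 0 identically
    subst hu0
    have hd0 : hestD κ ρ ξ 0 = (κ:ℂ) := by
      rw [hestD, show ((κ:ℂ) - ρ*ξ*0)^2 + 0*(1-0)*(ξ:ℂ)^2 = (((κ^2:ℝ)):ℂ) by push_cast; ring,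
        cpow_half_of_nonneg (sq_nonneg κ), Real.sqrt_sq hκ.le]
    have hg0 : hestGamma κ ρ ξ 0 = 0 := by
      rw [hestGamma, hd0]; simp
    have hb0 : ∀ τ : ℝ, hestB κ ρ ξ 0 τ = 0 := by
      intro τ; rw [hestB, hd0]; simp
    have ha0 : ∀ τ : ℝ, hestA κ θ ρ ξ 0 τ = 0 := by
      intro τ; rw [hestA, hd0, hg0]; simp
    have hG0 : ∀ τ : ℝ, hestG κ θ ξ v ρ t 0 τ = 0 := by
      intro τ; rw [hestG, hb0, ha0]; simp
    constructor
    · filter_upwards with τ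
      rw [show ((0:ℝ):ℂ) / ((a * Real.sqrt τ : ℝ) : ℂ) = 0 by simp, hg0, hb0 τ]
      norm_num
    · have : (fun τ : ℝ => ((a * Real.sqrt τ : ℝ) : ℂ) *
          hestG κ θ ξ v ρ t (((0:ℝ):ℂ) / ((a * Real.sqrt τ : ℝ) : ℂ)) τ) = fun _ => 0 := by
        funext τ
        rw [show ((0:ℝ):ℂ) / ((a * Real.sqrt τ : ℝ) : ℂ) = 0 by simp, hG0, mul_zero]
      rw [this]
      exact tendsto_const_nhds
  · -- hard case: u ≠ 0
    have hρ2 : 0 < 1 - ρ^2 := by nlinarith [hρ.1, hρ.2]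
    have hβ : 0 < betaT κ ξ t := by
      have h1 : Real.exp (-(κ * t)) < 1 := by
        rw [Real.exp_lt_one_iff]; nlinarith
      rw [betaT]
      apply div_pos (by nlinarith [pow_pos hξ 2]) (by linarith)
    have hu2 : u^2 * betaT κ ξ t < a^2 := by
      have h1 : |u| * Real.sqrt (betaT κ ξ t) < a :=
        (lt_div_iff₀ (Real.sqrt_pos.mpr hβ)).mp hu
      have h2 : (|u| * Real.sqrt (betaT κ ξ t))^2 < a^2 :=
        pow_lt_pow_left₀ h1 (by positivity) (by norm_num)
      rwa [mul_pow, sq_abs, Real.sq_sqrt hβ.le] at h2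
    set p : ℝ := ρ*ξ*u/a with hp_def
    set rr : ℝ := ξ * Real.sqrt (1-ρ^2) * |u| / a with hrr_def
    have hrr : 0 < rr :=
      div_pos (mul_pos (mul_pos hξ (Real.sqrt_pos.mpr hρ2)) (abs_pos.mpr hu0)) ha
    set qt : ℝ → ℝ := fun τ => (Real.sqrt τ*κ - p)^2 + (u/a)*(Real.sqrt τ - u/a)*ξ^2 with hqt_def
    set g : ℝ → ℝ := fun τ => Real.sqrt (-(qt τ)) with hg_def
    set x : ℝ → ℝ := fun τ => g τ * Real.sqrt τ with hx_def
    set pr : ℝ → ℝ := fun τ => Real.sqrt τ * κ - p with hpr_def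
    set EE : ℝ → ℂ := fun τ => Complex.exp (-(Complex.I * ((x τ : ℝ):ℂ))) with hEE_def
    set MN : ℝ → ℂ := fun τ =>
      (((pr τ:ℝ):ℂ) + Complex.I*((g τ:ℝ):ℂ)) -
        (((pr τ:ℝ):ℂ) - Complex.I*((g τ:ℝ):ℂ)) * EE τ with hMN_def
    set wc : ℝ → ℂ := fun τ => (u:ℂ)/((a*Real.sqrt τ : ℝ):ℂ) with hwc_def
    -- basic tendstos
    have hsq0 : Tendsto Real.sqrt (𝓝[>](0:ℝ)) (𝓝 0) :=
      (Real.continuous_sqrt.tendsto' 0 0 Real.sqrt_zero).mono_left nhdsWithin_le_nhds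
    have hqt0 : Tendsto qt (𝓝[>](0:ℝ)) (𝓝 (-(rr^2))) := by
      have hF : Continuous (fun s : ℝ => (s*κ - p)^2 + (u/a)*(s - u/a)*ξ^2) := by continuity
      have hval : (0*κ - p)^2 + (u/a)*(0 - u/a)*ξ^2 = -(rr^2) := by
        have h1 : Real.sqrt (1-ρ^2)^2 = 1-ρ^2 := Real.sq_sqrt hρ2.le
        have h2 : |u|^2 = u^2 := sq_abs u
        rw [hp_def, hrr_def]
        linear_combination (ξ^2*|u|^2/a^2)*h1 + (ξ^2*(1-ρ^2)/a^2)*h2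
      exact (hF.tendsto' 0 _ hval).comp hsq0
    have hg0 : Tendsto g (𝓝[>](0:ℝ)) (𝓝 rr) := by
      have h' : Tendsto (fun τ => -(qt τ)) (𝓝[>](0:ℝ)) (𝓝 (rr^2)) := by
        simpa using hqt0.neg
      have := (Real.continuous_sqrt.tendsto (rr^2)).comp h'
      simpa [hg_def, Function.comp_def, Real.sqrt_sq hrr.le] using this
    have hx0 : Tendsto x (𝓝[>](0:ℝ)) (𝓝 0) := by
      simpa using hg0.mul hsq0
    have hpr0 : Tendsto pr (𝓝[>](0:ℝ)) (𝓝 (-p)) := by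
      simpa using (hsq0.mul_const κ).sub_const p
    have hgC : Tendsto (fun τ => ((g τ : ℝ):ℂ)) (𝓝[>](0:ℝ)) (𝓝 ((rr:ℝ):ℂ)) :=
      (Complex.continuous_ofReal.tendsto _).comp hg0
    have hxC : Tendsto (fun τ => ((x τ : ℝ):ℂ)) (𝓝[>](0:ℝ)) (𝓝 0) := by
      simpa [Function.comp_def] using (Complex.continuous_ofReal.tendsto _).comp hx0
    have hprC : Tendsto (fun τ => ((pr τ : ℝ):ℂ)) (𝓝[>](0:ℝ)) (𝓝 (((-p:ℝ)):ℂ)) :=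
      (Complex.continuous_ofReal.tendsto _).comp hpr0
    have hsqC : Tendsto (fun τ => ((Real.sqrt τ : ℝ):ℂ)) (𝓝[>](0:ℝ)) (𝓝 0) := by
      simpa [Function.comp_def] using (Complex.continuous_ofReal.tendsto _).comp hsq0
    have hEE0 : Tendsto EE (𝓝[>](0:ℝ)) (𝓝 1) := by
      have h1 : Tendsto (fun τ => -(Complex.I * ((x τ : ℝ):ℂ))) (𝓝[>](0:ℝ)) (𝓝 0) := by
        simpa using (hxC.const_mul Complex.I).neg
      have := (Complex.continuous_exp.tendsto 0).comp h1
      simpa [hEE_def, Function.comp_def, Complex.exp_zero] using this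
    have hMN0 : Tendsto MN (𝓝[>](0:ℝ)) (𝓝 (2*Complex.I*((rr:ℝ):ℂ))) := by
      have h1 := (hprC.add (hgC.const_mul Complex.I)).sub
        ((hprC.sub (hgC.const_mul Complex.I)).mul hEE0)
      rw [show (2*Complex.I*((rr:ℝ):ℂ)) =
        (((-p:ℝ):ℂ) + Complex.I*((rr:ℝ):ℂ)) - ((((-p:ℝ)):ℂ) - Complex.I*((rr:ℝ):ℂ))*1 by ring]
      exact h1
    have h2Irr : (2*Complex.I*((rr:ℝ):ℂ)) ≠ 0 := by
      simp [Complex.I_ne_zero, Complex.ofReal_ne_zero, hrr.ne']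
    have hMNne : ∀ᶠ τ in 𝓝[>](0:ℝ), MN τ ≠ 0 := hMN0.eventually_ne h2Irr
    have hbasic : ∀ᶠ τ in 𝓝[>](0:ℝ), 0 < τ ∧ qt τ < 0 := by
      have h1 : ∀ᶠ τ in 𝓝[>](0:ℝ), 0 < τ := self_mem_nhdsWithin
      have h2 : ∀ᶠ τ in 𝓝[>](0:ℝ), qt τ < 0 :=
        hqt0.eventually_lt_const (neg_lt_zero.mpr (by positivity))
      exact h1.and h2
    -- key identities
    have key : ∀ᶠ τ in 𝓝[>](0:ℝ),
        ((1 - hestGamma κ ρ ξ (wc τ) * Complex.exp (-(hestD κ ρ ξ (wc τ)) * (τ:ℂ))) /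
          (1 - hestGamma κ ρ ξ (wc τ))) = MN τ / (2*Complex.I*((g τ:ℝ):ℂ)) ∧
        hestB κ ρ ξ (wc τ) τ = (((u/a)^2 - (u/a)*Real.sqrt τ : ℝ):ℂ) *
          ((1 - Complex.exp (-(Complex.I * ((x τ:ℝ):ℂ)))) / (Complex.I * ((x τ:ℝ):ℂ))) *
          ((Complex.I*((g τ:ℝ):ℂ)) / MN τ) ∧
        ((κ:ℂ) - (ρ:ℂ)*(ξ:ℂ)*(wc τ) - hestD κ ρ ξ (wc τ)) * (τ:ℂ) =
          (((pr τ:ℝ):ℂ) - Complex.I*((g τ:ℝ):ℂ)) * ((Real.sqrt τ : ℝ):ℂ) := by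
      filter_upwards [hbasic, hMNne] with τ hb hMNn
      obtain ⟨hτ, hqneg⟩ := hb
      have hs : 0 < Real.sqrt τ := Real.sqrt_pos.mpr hτ
      have hss : Real.sqrt τ * Real.sqrt τ = τ := Real.mul_self_sqrt hτ.le
      have hsCne : ((Real.sqrt τ:ℝ):ℂ) ≠ 0 := Complex.ofReal_ne_zero.mpr hs.ne'
      have haCne : ((a:ℝ):ℂ) ≠ 0 := Complex.ofReal_ne_zero.mpr ha.ne'
      have hξCne : ((ξ:ℝ):ℂ) ≠ 0 := Complex.ofReal_ne_zero.mpr hξ.ne'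
      have hwc : wc τ = ((u/(a*Real.sqrt τ) : ℝ):ℂ) := by
        rw [hwc_def]; push_cast; ring
      set qR : ℝ := (κ - ρ*ξ*(u/(a*Real.sqrt τ)))^2 +
        (u/(a*Real.sqrt τ))*(1-(u/(a*Real.sqrt τ)))*ξ^2 with hqR_def
      have hqRτ : qR * τ = qt τ := by
        have halg0 : ∀ S : ℝ, S ≠ 0 → ((κ - ρ*ξ*(u/(a*S)))^2 +
            (u/(a*S))*(1-(u/(a*S)))*ξ^2) * (S*S)
            = (S*κ - ρ*ξ*u/a)^2 + (u/a)*(S - u/a)*ξ^2 := by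
          intro S hS
          field_simp
        have halg := halg0 (Real.sqrt τ) hs.ne'
        rw [hss] at halg
        rw [hqR_def]
        simp only [hqt_def, hp_def]
        exact halg
      have hqRneg : qR < 0 := by
        by_contra h
        push_neg at h
        nlinarith [mul_nonneg h hτ.le]
      have hGpos : 0 < Real.sqrt (-qR) := Real.sqrt_pos.mpr (by linarith)
      have hbase : ((κ:ℂ) - (ρ:ℂ)*(ξ:ℂ)*(wc τ))^2 + (wc τ)*(1-(wc τ))*((ξ:ℂ))^2
          = ((qR:ℝ):ℂ) := by
        rw [hwc, hqR_def]; push_cast; ring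
      have hD : hestD κ ρ ξ (wc τ) = Complex.I * ((Real.sqrt (-qR) :ℝ):ℂ) := by
        unfold hestD
        rw [hbase, cpow_half_of_neg hqRneg]
      have hgs : g τ = Real.sqrt (-qR) * Real.sqrt τ := by
        simp only [hg_def]
        rw [show -(qt τ) = (-qR) * τ by rw [← hqRτ]; ring,
          Real.sqrt_mul (by linarith : (0:ℝ) ≤ -qR)]
      have hgpos : 0 < g τ := by rw [hgs]; exact mul_pos hGpos hs
      have hgCne : ((g τ:ℝ):ℂ) ≠ 0 := Complex.ofReal_ne_zero.mpr hgpos.ne'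
      have hEq : Complex.exp (-(hestD κ ρ ξ (wc τ)) * (τ:ℂ)) = EE τ := by
        simp only [hEE_def]
        congr 1
        simp only [hx_def]
        rw [hD, hgs, show (τ:ℂ) = ((Real.sqrt τ * Real.sqrt τ : ℝ):ℂ) by rw [hss]]
        push_cast
        ring
      have hNs : ((κ:ℂ) - (ρ:ℂ)*(ξ:ℂ)*(wc τ) - hestD κ ρ ξ (wc τ)) * ((Real.sqrt τ:ℝ):ℂ)
          = ((pr τ:ℝ):ℂ) - Complex.I*((g τ:ℝ):ℂ) := by
        rw [hD, hgs, hwc]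
        simp only [hpr_def, hp_def]
        push_cast
        field_simp
      have hMs : ((κ:ℂ) - (ρ:ℂ)*(ξ:ℂ)*(wc τ) + hestD κ ρ ξ (wc τ)) * ((Real.sqrt τ:ℝ):ℂ)
          = ((pr τ:ℝ):ℂ) + Complex.I*((g τ:ℝ):ℂ) := by
        rw [hD, hgs, hwc]
        simp only [hpr_def, hp_def]
        push_cast
        field_simp
      have hMτne : (((pr τ:ℝ):ℂ) + Complex.I*((g τ:ℝ):ℂ)) ≠ 0 := by
        intro h
        have him := congrArg Complex.im h
        simp at him
        exact hgpos.ne' him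
      have hNf : ((κ:ℂ) - (ρ:ℂ)*(ξ:ℂ)*(wc τ) - hestD κ ρ ξ (wc τ))
          = (((pr τ:ℝ):ℂ) - Complex.I*((g τ:ℝ):ℂ))/((Real.sqrt τ:ℝ):ℂ) := by
        rw [eq_div_iff hsCne]; exact hNs
      have hMf : ((κ:ℂ) - (ρ:ℂ)*(ξ:ℂ)*(wc τ) + hestD κ ρ ξ (wc τ))
          = (((pr τ:ℝ):ℂ) + Complex.I*((g τ:ℝ):ℂ))/((Real.sqrt τ:ℝ):ℂ) := by
        rw [eq_div_iff hsCne]; exact hMs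
      have hγ : hestGamma κ ρ ξ (wc τ) =
          (((pr τ:ℝ):ℂ) - Complex.I*((g τ:ℝ):ℂ))/(((pr τ:ℝ):ℂ) + Complex.I*((g τ:ℝ):ℂ)) := by
        unfold hestGamma
        rw [hNf, hMf, div_div_div_cancel_right₀ hsCne]
      have h1γE : 1 - hestGamma κ ρ ξ (wc τ) * EE τ
          = MN τ / (((pr τ:ℝ):ℂ) + Complex.I*((g τ:ℝ):ℂ)) := by
        rw [hγ, hMN_def]
        field_simp
      have h1γ : 1 - hestGamma κ ρ ξ (wc τ)
          = (2*Complex.I*((g τ:ℝ):ℂ)) / (((pr τ:ℝ):ℂ) + Complex.I*((g τ:ℝ):ℂ)) := by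
        rw [hγ]
        field_simp
        ring
      refine ⟨?_, ?_, ?_⟩
      · rw [hEq, h1γE, h1γ, div_div_div_cancel_right₀ hMτne]
      · -- B identity
        have hreal : pr τ^2 + g τ^2 = ((u/a)^2 - (u/a)*Real.sqrt τ)*ξ^2 := by
          have hg2 : g τ^2 = -(qt τ) := by
            simp only [hg_def]
            exact Real.sq_sqrt (by linarith)
          simp only [hpr_def]
          rw [hg2]
          simp only [hqt_def, hp_def]
          ring
        have hNM : ((((pr τ:ℝ):ℂ) - Complex.I*((g τ:ℝ):ℂ)))*((((pr τ:ℝ):ℂ) + Complex.I*((g τ:ℝ):ℂ)))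
            = (((u/a)^2 - (u/a)*Real.sqrt τ : ℝ):ℂ)*((ξ:ℝ):ℂ)^2 := by
          have h2 : ((((pr τ:ℝ):ℂ) - Complex.I*((g τ:ℝ):ℂ)))*((((pr τ:ℝ):ℂ) + Complex.I*((g τ:ℝ):ℂ)))
              = ((pr τ:ℝ):ℂ)^2 + ((g τ:ℝ):ℂ)^2 := by
            have := Complex.I_sq
            linear_combination (-(((g τ:ℝ):ℂ))^2) * this
          rw [h2, show ((pr τ:ℝ):ℂ)^2 + ((g τ:ℝ):ℂ)^2 = (((pr τ^2 + g τ^2 :ℝ)):ℂ) by push_cast; ring,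
            hreal]
          push_cast
          ring
        have hEEτ : Complex.exp (-(Complex.I * ((x τ:ℝ):ℂ))) = EE τ := by
          simp only [hEE_def]
        have hxc : ((x τ : ℝ):ℂ) = ((g τ:ℝ):ℂ) * ((Real.sqrt τ:ℝ):ℂ) := by
          simp only [hx_def]; push_cast; ring
        unfold hestB
        rw [hEq, h1γE, hNf, hEEτ, hxc, div_div_eq_mul_div]
        have h1 : ((Real.sqrt τ:ℝ):ℂ) * ((ξ:ℝ):ℂ)^2 * MN τ ≠ 0 :=
          mul_ne_zero (mul_ne_zero hsCne (pow_ne_zero 2 hξCne)) hMNn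
        have h2 : (Complex.I * (((g τ:ℝ):ℂ) * ((Real.sqrt τ:ℝ):ℂ))) * MN τ ≠ 0 :=
          mul_ne_zero (mul_ne_zero Complex.I_ne_zero (mul_ne_zero hgCne hsCne)) hMNn
        conv_lhs => rw [div_div, div_mul_div_comm]
        conv_rhs => rw [← mul_div_assoc, ← mul_div_assoc, div_mul_eq_mul_div, div_div]
        rw [div_eq_div_iff h1 h2]
        linear_combination ((1 - EE τ) * MN τ * Complex.I * ((g τ:ℝ):ℂ) * ((Real.sqrt τ:ℝ):ℂ)) * hNM
      · rw [show ((κ:ℂ) - (ρ:ℂ)*(ξ:ℂ)*(wc τ) - hestD κ ρ ξ (wc τ)) * (τ:ℂ)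
            = (((κ:ℂ) - (ρ:ℂ)*(ξ:ℂ)*(wc τ) - hestD κ ρ ξ (wc τ)) * ((Real.sqrt τ:ℝ):ℂ))
              * ((Real.sqrt τ:ℝ):ℂ) by
          rw [show (τ:ℂ) = ((Real.sqrt τ * Real.sqrt τ : ℝ):ℂ) by rw [hss]]
          push_cast; ring, hNs]

    -- limits assembled
    have hratio : Tendsto (fun τ =>
        (1 - hestGamma κ ρ ξ (wc τ) * Complex.exp (-(hestD κ ρ ξ (wc τ)) * (τ:ℂ))) /
          (1 - hestGamma κ ρ ξ (wc τ))) (𝓝[>](0:ℝ)) (𝓝 1) := by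
      have h1 : Tendsto (fun τ => MN τ / (2*Complex.I*((g τ:ℝ):ℂ))) (𝓝[>](0:ℝ)) (𝓝 1) := by
        have h2 : Tendsto (fun τ => 2*Complex.I*((g τ:ℝ):ℂ)) (𝓝[>](0:ℝ))
            (𝓝 (2*Complex.I*((rr:ℝ):ℂ))) := by
          exact (hgC.const_mul _)
        have := hMN0.div h2 h2Irr
        rw [div_self h2Irr] at this; exact this
      exact h1.congr' (key.mono fun τ h => h.1.symm)
    have hxne : ∀ᶠ τ in 𝓝[>](0:ℝ), Complex.I * ((x τ:ℝ):ℂ) ≠ 0 := by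
      filter_upwards [hbasic] with τ ⟨hτ, hqneg⟩
      have hxpos : 0 < x τ := by
        rw [hx_def]
        exact mul_pos (Real.sqrt_pos.mpr (by linarith)) (Real.sqrt_pos.mpr hτ)
      exact mul_ne_zero Complex.I_ne_zero (by exact_mod_cast hxpos.ne')
    have hmid : Tendsto (fun τ =>
        (1 - Complex.exp (-(Complex.I * ((x τ:ℝ):ℂ)))) / (Complex.I * ((x τ:ℝ):ℂ)))
        (𝓝[>](0:ℝ)) (𝓝 1) := by
      have harg : Tendsto (fun τ => Complex.I * ((x τ:ℝ):ℂ)) (𝓝[>](0:ℝ)) (𝓝[≠] (0:ℂ)) := by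
        rw [tendsto_nhdsWithin_iff]
        refine ⟨by simpa using hxC.const_mul Complex.I, ?_⟩
        filter_upwards [hxne] with τ h using h
      exact tendsto_expFactor.comp harg
    have hBlim : Tendsto (fun τ => hestB κ ρ ξ (wc τ) τ) (𝓝[>](0:ℝ))
        (𝓝 (((u^2/(2*a^2) : ℝ)):ℂ)) := by
      have hf1 : Tendsto (fun τ => (((u/a)^2 - (u/a)*Real.sqrt τ : ℝ):ℂ)) (𝓝[>](0:ℝ))
          (𝓝 ((((u/a)^2:ℝ)):ℂ)) := by
        apply (Complex.continuous_ofReal.tendsto _).comp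
        simpa using (tendsto_const_nhds.sub (hsq0.const_mul (u/a)))
      have hf3 : Tendsto (fun τ => (Complex.I*((g τ:ℝ):ℂ)) / MN τ) (𝓝[>](0:ℝ))
          (𝓝 ((Complex.I*((rr:ℝ):ℂ)) / (2*Complex.I*((rr:ℝ):ℂ)))) :=
        (hgC.const_mul _).div hMN0 h2Irr
      have := (hf1.mul hmid).mul hf3
      rw [show ((((u/a)^2:ℝ)):ℂ) * 1 * ((Complex.I*((rr:ℝ):ℂ)) / (2*Complex.I*((rr:ℝ):ℂ)))
          = (((u^2/(2*a^2) : ℝ)):ℂ) by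
        rw [mul_one, show Complex.I*((rr:ℝ):ℂ)/(2*Complex.I*((rr:ℝ):ℂ)) = 1/2 by
          rw [div_eq_iff h2Irr]; ring]
        push_cast
        field_simp] at this
      exact this.congr' (key.mono fun τ h => h.2.1.symm)
    set L : ℝ := 1 - betaT κ ξ t * u^2 / a^2 with hL_def
    have hL : 0 < L := by
      have h1 : betaT κ ξ t * u^2 / a^2 < 1 := (div_lt_one (by positivity)).mpr (by nlinarith)
      rw [hL_def]; linarith
    have hden : Tendsto (fun τ => 1 - 2*((betaT κ ξ t:ℝ):ℂ)* hestB κ ρ ξ (wc τ) τ)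
        (𝓝[>](0:ℝ)) (𝓝 ((L:ℝ):ℂ)) := by
      have h1 : Tendsto (fun τ => (1:ℂ) - 2*((betaT κ ξ t:ℝ):ℂ)* hestB κ ρ ξ (wc τ) τ)
          (𝓝[>](0:ℝ)) (𝓝 ((1:ℂ) - 2*((betaT κ ξ t:ℝ):ℂ)*(((u^2/(2*a^2):ℝ)):ℂ))) :=
        tendsto_const_nhds.sub (hBlim.const_mul (2*((betaT κ ξ t:ℝ):ℂ)))
      rw [show ((L:ℝ):ℂ) = (1:ℂ) - 2*((betaT κ ξ t:ℝ):ℂ)*(((u^2/(2*a^2):ℝ)):ℂ) by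
        rw [hL_def]; push_cast; field_simp]
      exact h1
    have hLne : ((L:ℝ):ℂ) ≠ 0 := Complex.ofReal_ne_zero.mpr hL.ne'
    have hdenne : ∀ᶠ τ in 𝓝[>](0:ℝ),
        1 - 2*((betaT κ ξ t:ℝ):ℂ)* hestB κ ρ ξ (wc τ) τ ≠ 0 := hden.eventually_ne hLne
    have hlogden : Tendsto (fun τ => Complex.log (1 - 2*((betaT κ ξ t:ℝ):ℂ)* hestB κ ρ ξ (wc τ) τ))
        (𝓝[>](0:ℝ)) (𝓝 (Complex.log ((L:ℝ):ℂ))) := by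
      have hc : ContinuousAt Complex.log ((L:ℝ):ℂ) :=
        continuousAt_clog (Complex.mem_slitPlane_iff.mpr (Or.inl (by simpa using hL)))
      exact hc.tendsto.comp hden
    have hlograt : Tendsto (fun τ =>
        Complex.log ((1 - hestGamma κ ρ ξ (wc τ) * Complex.exp (-(hestD κ ρ ξ (wc τ)) * (τ:ℂ))) /
          (1 - hestGamma κ ρ ξ (wc τ)))) (𝓝[>](0:ℝ)) (𝓝 0) := by
      have hc : ContinuousAt Complex.log 1 :=
        continuousAt_clog (Complex.mem_slitPlane_iff.mpr (Or.inl (by norm_num)))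
      have := hc.tendsto.comp hratio
      rw [Complex.log_one] at this; exact this
    have hNτ : Tendsto (fun τ => ((κ:ℂ) - (ρ:ℂ)*(ξ:ℂ)*(wc τ) - hestD κ ρ ξ (wc τ)) * (τ:ℂ))
        (𝓝[>](0:ℝ)) (𝓝 0) := by
      have h1 : Tendsto (fun τ => (((pr τ:ℝ):ℂ) - Complex.I*((g τ:ℝ):ℂ)) * ((Real.sqrt τ : ℝ):ℂ))
          (𝓝[>](0:ℝ)) (𝓝 0) := by
        have := (hprC.sub (hgC.const_mul Complex.I)).mul hsqC
        simpa using this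
      exact h1.congr' (key.mono fun τ h => h.2.2.symm)
    have hA : Tendsto (fun τ => hestA κ θ ρ ξ (wc τ) τ) (𝓝[>](0:ℝ)) (𝓝 0) := by
      have h1 := (hNτ.sub (hlograt.const_mul 2)).const_mul ((κ*θ/ξ^2:ℝ):ℂ)
      simp only [hestA]
      simpa using h1
    have hGlim : Tendsto (fun τ => hestG κ θ ξ v ρ t (wc τ) τ) (𝓝[>](0:ℝ))
        (𝓝 ((0:ℂ) + (((u^2/(2*a^2):ℝ)):ℂ) * (v:ℂ) * ((Real.exp (-(κ*t)) : ℝ):ℂ) / ((L:ℝ):ℂ) -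
          ((2*κ*θ/ξ^2:ℝ):ℂ) * Complex.log ((L:ℝ):ℂ))) := by
      simp only [hestG]
      exact (hA.add (((hBlim.mul_const _).mul_const _).div hden hLne)).sub
        (hlogden.const_mul _)
    have hcoef : Tendsto (fun τ : ℝ => ((a*Real.sqrt τ:ℝ):ℂ)) (𝓝[>](0:ℝ)) (𝓝 0) := by
      have := (Complex.continuous_ofReal.tendsto _).comp (hsq0.const_mul a)
      simpa [Function.comp_def, Complex.ofReal_mul] using this
    constructor
    · filter_upwards [hratio.eventually_ne one_ne_zero, hdenne] with τ h1 h2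
      rw [hwc_def] at h1 h2
      exact ⟨h1, h2⟩
    · have h1 := hcoef.mul hGlim
      rw [zero_mul] at h1
      have h2 : (fun τ : ℝ => ((a * Real.sqrt τ : ℝ) : ℂ) *
          hestG κ θ ξ v ρ t ((u : ℂ) / ((a * Real.sqrt τ : ℝ) : ℂ)) τ) =
          fun τ : ℝ => ((a*Real.sqrt τ:ℝ):ℂ) * hestG κ θ ξ v ρ t (wc τ) τ := by
        rw [hwc_def]
      rw [h2]
      exact h1




end
end

section
/- Let h : (0,∞) → (0,∞) be continuous with lim_{τ→0+} h(τ) = 0 and lim_{τ→0+} τ/h(τ) = 0, and fix a real u ≠ 0. Then A(u/h(τ), τ) = O((τ/h(τ))²) as τ → 0+. -/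
open Filter Topology Asymptotics MeasureTheory

set_option linter.unusedVariables false

noncomputable section


set_option maxHeartbeats 1600000 in
lemma hest_core (κ θ ξ ρ : ℝ) (hκ : 0 < κ) (hθ : 0 < θ) (hξ : 0 < ξ)
    (hρ : ρ ∈ Set.Ioo (-1 : ℝ) 1) :
    ∃ W₀ : ℝ, 1 ≤ W₀ ∧ ∃ ε : ℝ, 0 < ε ∧ ∃ M : ℝ, 0 < M ∧
      ∀ w τ : ℝ, 0 < τ → W₀ ≤ |w| → |w| * τ ≤ ε →
        ‖hestA κ θ ρ ξ ((w : ℝ) : ℂ) τ‖ ≤ M * (|w| * τ) ^ 2 := by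
  obtain ⟨hρ1, hρ2⟩ := hρ
  obtain ⟨a, ha_def⟩ : ∃ x : ℝ, x = (1 - ρ ^ 2) * ξ ^ 2 := ⟨_, rfl⟩
  have ha : 0 < a := by
    have h1 : 0 < 1 - ρ ^ 2 := by nlinarith
    rw [ha_def]; positivity
  obtain ⟨b, hb_def⟩ : ∃ x : ℝ, x = ξ ^ 2 - 2 * κ * ρ * ξ := ⟨_, rfl⟩
  obtain ⟨W₀, hW₀⟩ : ∃ x : ℝ, x = max 1 (2 * (|b| + κ ^ 2) / a) := ⟨_, rfl⟩
  obtain ⟨K₁, hK₁def⟩ : ∃ x : ℝ, x = Real.sqrt (a / 2) := ⟨_, rfl⟩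
  obtain ⟨K₂, hK₂def⟩ : ∃ x : ℝ, x = Real.sqrt (2 * a) := ⟨_, rfl⟩
  have hK₁ : 0 < K₁ := hK₁def ▸ Real.sqrt_pos.mpr (by linarith)
  have hK₂ : 0 < K₂ := hK₂def ▸ Real.sqrt_pos.mpr (by linarith)
  obtain ⟨B, hB⟩ : ∃ x : ℝ, x = (κ + ξ + K₂) / K₁ := ⟨_, rfl⟩
  have hBpos : 0 < B := hB ▸ by positivity
  obtain ⟨ε, hε⟩ : ∃ x : ℝ, x = min (1 / K₂) (1 / (2 * B * K₂)) := ⟨_, rfl⟩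
  have hεpos : 0 < ε := hε ▸ lt_min (by positivity) (by positivity)
  obtain ⟨M, hM⟩ : ∃ x : ℝ, x = |κ * θ / ξ ^ 2| * ((B + 2 * B ^ 2) * K₂ ^ 2) := ⟨_, rfl⟩
  have hMpos : 0 < M := by
    have h1 : 0 < κ * θ / ξ ^ 2 := by positivity
    rw [hM, abs_of_pos h1]; positivity
  refine ⟨W₀, hW₀ ▸ le_max_left _ _, ε, hεpos, M, hMpos, ?_⟩
  intro w τ hτ hw hwτ
  have hw1 : 1 ≤ |w| := le_trans (hW₀ ▸ le_max_left 1 _) hw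
  have hw0 : (0 : ℝ) < |w| := lt_of_lt_of_le one_pos hw1
  have hwa : 2 * (|b| + κ ^ 2) ≤ a * |w| := by
    have h1 := le_trans (hW₀ ▸ le_max_right 1 (2 * (|b| + κ ^ 2) / a)) hw
    calc 2 * (|b| + κ ^ 2) = (2 * (|b| + κ ^ 2) / a) * a := by field_simp
    _ ≤ |w| * a := mul_le_mul_of_nonneg_right h1 ha.le
    _ = a * |w| := mul_comm _ _
  obtain ⟨Δ, hΔ⟩ : ∃ x : ℝ, x = (κ - ρ * ξ * w) ^ 2 + w * (1 - w) * ξ ^ 2 := ⟨_, rfl⟩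
  have hΔquad : Δ = -a * w ^ 2 + b * w + κ ^ 2 := by rw [hΔ, ha_def, hb_def]; ring
  have habs : |w| ^ 2 = w ^ 2 := sq_abs w
  have hbw : b * w ≤ |b| * |w| := by rw [← abs_mul]; exact le_abs_self _
  have hbw' : -(|b| * |w|) ≤ b * w := by rw [← abs_mul]; exact neg_abs_le _
  have hκw : κ ^ 2 ≤ κ ^ 2 * |w| := by
    have := mul_le_mul_of_nonneg_left hw1 (sq_nonneg κ); linarith
  have habs' : a * |w| ^ 2 = a * w ^ 2 := by rw [habs]
  have key : 2 * (|b| * |w|) + 2 * (κ ^ 2 * |w|) ≤ a * w ^ 2 := by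
    have k1 : |w| * (2 * (|b| + κ ^ 2)) ≤ |w| * (a * |w|) :=
      mul_le_mul_of_nonneg_left hwa (abs_nonneg w)
    linarith [k1, habs']
  have hbn : (0 : ℝ) ≤ |b| * |w| := mul_nonneg (abs_nonneg b) (abs_nonneg w)
  have hκn : (0 : ℝ) ≤ κ ^ 2 * |w| := mul_nonneg (sq_nonneg κ) (abs_nonneg w)
  have hΔ1 : Δ ≤ -(a / 2) * w ^ 2 := by rw [hΔquad]; linarith
  have hΔ2 : -Δ ≤ 2 * a * w ^ 2 := by rw [hΔquad]; linarith [sq_nonneg κ]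
  have hΔ0 : Δ < 0 := by
    have : (0 : ℝ) < κ ^ 2 * |w| := mul_pos (pow_pos hκ 2) hw0
    linarith
  -- complex setup
  obtain ⟨d, hd_def⟩ : ∃ x : ℂ, x = hestD κ ρ ξ ((w : ℝ) : ℂ) := ⟨_, rfl⟩
  obtain ⟨m, hm_def⟩ : ∃ x : ℂ, x = (κ : ℂ) - (ρ : ℂ) * (ξ : ℂ) * ((w : ℝ) : ℂ) := ⟨_, rfl⟩
  have hbase : ((κ : ℂ) - (ρ : ℂ) * (ξ : ℂ) * ((w : ℝ) : ℂ)) ^ 2 +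
      ((w : ℝ) : ℂ) * (1 - ((w : ℝ) : ℂ)) * (ξ : ℂ) ^ 2 = ((Δ : ℝ) : ℂ) := by
    rw [hΔ]; push_cast; ring
  have hd2 : d ^ 2 = ((Δ : ℝ) : ℂ) := by
    rw [hd_def, hestD, hbase]
    have h12 : ((1 : ℂ) / 2) = (((2 : ℕ) : ℂ))⁻¹ := by norm_num
    rw [h12]
    exact Complex.cpow_nat_inv_pow _ two_ne_zero
  have hnd : ‖d‖ ^ 2 = -Δ := by
    have h1 : ‖d‖ ^ 2 = ‖d ^ 2‖ := (norm_pow d 2).symm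
    rw [h1, hd2, Complex.norm_real, Real.norm_eq_abs, abs_of_neg hΔ0]
  have hd0 : d ≠ 0 := by
    intro h0
    rw [h0] at hnd
    simp at hnd
    linarith
  obtain ⟨δ, hδ⟩ : ∃ x : ℝ, x = ‖d‖ := ⟨_, rfl⟩
  have hδnd : δ ^ 2 = -Δ := by rw [hδ]; exact hnd
  have hδpos : 0 < δ := by rw [hδ]; exact norm_pos_iff.mpr hd0
  have hδeq : δ = Real.sqrt (-Δ) := by
    rw [← hδnd, Real.sqrt_sq hδpos.le]
  have hK₂sq : K₂ ^ 2 = 2 * a := by rw [hK₂def]; exact Real.sq_sqrt (by linarith)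
  have hK₁sq : K₁ ^ 2 = a / 2 := by rw [hK₁def]; exact Real.sq_sqrt (by linarith)
  have hδle : δ ≤ K₂ * |w| := by
    have h1 : δ ^ 2 ≤ (K₂ * |w|) ^ 2 := by
      rw [hδnd, mul_pow, hK₂sq, habs]; linarith
    exact (pow_le_pow_iff_left₀ hδpos.le (by positivity) two_ne_zero).mp h1
  have hδge : K₁ * |w| ≤ δ := by
    have h1 : (K₁ * |w|) ^ 2 ≤ δ ^ 2 := by
      rw [hδnd, mul_pow, hK₁sq, habs]; linarith
    exact (pow_le_pow_iff_left₀ (by positivity) hδpos.le two_ne_zero).mp h1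
  have hmnorm : ‖m‖ ≤ (κ + ξ) * |w| := by
    have h1 : ‖m‖ ≤ ‖(κ : ℂ)‖ + ‖(ρ : ℂ) * (ξ : ℂ) * ((w : ℝ) : ℂ)‖ := hm_def ▸ norm_sub_le _ _
    have h2 : ‖(κ : ℂ)‖ = κ := by rw [Complex.norm_real, Real.norm_eq_abs, abs_of_pos hκ]
    have h3 : ‖(ρ : ℂ) * (ξ : ℂ) * ((w : ℝ) : ℂ)‖ = |ρ| * ξ * |w| := by
      rw [norm_mul, norm_mul, Complex.norm_real, Complex.norm_real, Complex.norm_real,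
        Real.norm_eq_abs, Real.norm_eq_abs, Real.norm_eq_abs, abs_of_pos hξ]
    have hρabs : |ρ| ≤ 1 := abs_le.mpr ⟨hρ1.le, hρ2.le⟩
    rw [h2, h3] at h1
    have f1 : κ * 1 ≤ κ * |w| := mul_le_mul_of_nonneg_left hw1 hκ.le
    have f2 : |ρ| * ξ * |w| ≤ 1 * ξ * |w| :=
      mul_le_mul_of_nonneg_right (mul_le_mul_of_nonneg_right hρabs hξ.le) (abs_nonneg w)
    linarith [f1, f2]
  have hmd : m + d ≠ 0 := by
    intro h0
    have hdm : d = -m := by linear_combination h0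
    have h1 : ((Δ : ℝ) : ℂ) = m ^ 2 := by rw [← hd2, hdm]; ring
    have h2 : m ^ 2 = (((κ - ρ * ξ * w) ^ 2 : ℝ) : ℂ) := by rw [hm_def]; push_cast; ring
    rw [h2] at h1
    have h3 : Δ = (κ - ρ * ξ * w) ^ 2 := Complex.ofReal_inj.mp h1
    linarith [sq_nonneg (κ - ρ * ξ * w)]
  -- exponential and s
  obtain ⟨ecx, he_def⟩ : ∃ x : ℂ, x = Complex.exp (-d * (τ : ℂ)) := ⟨_, rfl⟩
  obtain ⟨s, hs_def⟩ : ∃ x : ℝ, x = δ * τ := ⟨_, rfl⟩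
  have hsnn : 0 ≤ s := by rw [hs_def]; positivity
  have hsnorm : ‖d * (τ : ℂ)‖ = s := by
    rw [hs_def, norm_mul, Complex.norm_real, Real.norm_eq_abs, abs_of_pos hτ, hδ]
  have hsK : s ≤ K₂ * (|w| * τ) := by
    rw [hs_def]
    calc δ * τ ≤ (K₂ * |w|) * τ := mul_le_mul_of_nonneg_right hδle hτ.le
    _ = K₂ * (|w| * τ) := by ring
  have hK₂0 : K₂ ≠ 0 := ne_of_gt hK₂
  have hB0 : B ≠ 0 := ne_of_gt hBpos
  have hKε : K₂ * ε ≤ 1 := by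
    have h1 : ε ≤ 1 / K₂ := hε ▸ min_le_left _ _
    have h2 := mul_le_mul_of_nonneg_left h1 hK₂.le
    have h3 : K₂ * (1 / K₂) = 1 := by field_simp
    linarith [h2, h3.le]
  have hsε : s ≤ K₂ * ε := le_trans hsK (mul_le_mul_of_nonneg_left hwτ hK₂.le)
  have hs1 : s ≤ 1 := le_trans hsε hKε
  have hBs : B * s ≤ 1 / 2 := by
    have h1 : ε ≤ 1 / (2 * B * K₂) := hε ▸ min_le_right _ _
    have h2 : s ≤ K₂ * (1 / (2 * B * K₂)) :=
      le_trans hsε (mul_le_mul_of_nonneg_left h1 hK₂.le)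
    have h3 : K₂ * (1 / (2 * B * K₂)) = 1 / (2 * B) := by
      field_simp
    rw [h3] at h2
    have h4 : B * s ≤ B * (1 / (2 * B)) := mul_le_mul_of_nonneg_left h2 hBpos.le
    have h5 : B * (1 / (2 * B)) = 1 / 2 := by
      rw [mul_one_div]
      rw [div_eq_div_iff (by positivity) (by norm_num : (2:ℝ) ≠ 0)]
      ring
    linarith [h4, h5.le]
  have hEexp : ‖ecx - 1 + d * (τ : ℂ)‖ ≤ s ^ 2 := by
    have hneg : -d * (τ : ℂ) = -(d * (τ : ℂ)) := by ring
    have h1 : ‖(-(d * (τ : ℂ)))‖ ≤ 1 := by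
      rw [norm_neg, hsnorm]; exact hs1
    have h2 := Complex.norm_exp_sub_one_sub_id_le h1
    have h3 : Complex.exp (-(d * (τ : ℂ))) - 1 - -(d * (τ : ℂ)) = ecx - 1 + d * (τ : ℂ) := by
      rw [he_def, hneg]; ring
    rw [h3, norm_neg, hsnorm] at h2
    exact h2
  have h1e : ‖1 - ecx‖ ≤ 2 * s := by
    have h0 : (1 : ℂ) - ecx = -((ecx - 1 + d * (τ : ℂ)) - d * (τ : ℂ)) := by ring
    rw [h0, norm_neg]
    calc ‖(ecx - 1 + d * (τ : ℂ)) - d * (τ : ℂ)‖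
        ≤ ‖ecx - 1 + d * (τ : ℂ)‖ + ‖d * (τ : ℂ)‖ := norm_sub_le _ _
    _ ≤ s ^ 2 + s := by rw [hsnorm]; exact add_le_add_left hEexp _
    _ ≤ 2 * s := by
        have := mul_le_mul_of_nonneg_right hs1 hsnn
        have hsq : s ^ 2 = s * s := sq s
        linarith
  -- gamma and z
  have hγ : hestGamma κ ρ ξ ((w : ℝ) : ℂ) = (m - d) / (m + d) := by
    rw [hestGamma, hm_def, hd_def]
  obtain ⟨z, hz_def⟩ : ∃ x : ℂ, x = (m - d) * (1 - ecx) / (2 * d) := ⟨_, rfl⟩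
  have h1γeq : (1 : ℂ) - (m - d) / (m + d) = 2 * d / (m + d) := by
    field_simp
    ring
  have h1γ0 : (1 : ℂ) - (m - d) / (m + d) ≠ 0 := by
    rw [h1γeq]
    exact div_ne_zero (mul_ne_zero two_ne_zero hd0) hmd
  have hQ : (1 - (m - d) / (m + d) * ecx) / (1 - (m - d) / (m + d)) = 1 + z := by
    rw [div_eq_iff h1γ0, hz_def, h1γeq]
    field_simp
    ring
  -- norm of z
  have hmd_norm : ‖m - d‖ ≤ (κ + ξ + K₂) * |w| := by
    calc ‖m - d‖ ≤ ‖m‖ + ‖d‖ := norm_sub_le _ _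
    _ ≤ (κ + ξ) * |w| + K₂ * |w| := add_le_add hmnorm (by rw [← hδ]; exact hδle)
    _ = (κ + ξ + K₂) * |w| := by ring
  have hznorm : ‖z‖ ≤ B * s := by
    have hnum : ‖(m - d) * (1 - ecx)‖ ≤ ((κ + ξ + K₂) * |w|) * (2 * s) := by
      rw [norm_mul]
      exact mul_le_mul hmd_norm h1e (norm_nonneg _) (by positivity)
    have hden : ‖(2 : ℂ) * d‖ = 2 * δ := by
      rw [norm_mul, hδ]; norm_num
    have hden2 : 2 * (K₁ * |w|) ≤ 2 * δ := by linarith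
    have h1 : ‖z‖ = ‖(m - d) * (1 - ecx)‖ / ‖(2 : ℂ) * d‖ := by rw [hz_def, norm_div]
    rw [h1, hden]
    calc ‖(m - d) * (1 - ecx)‖ / (2 * δ)
        ≤ ((κ + ξ + K₂) * |w|) * (2 * s) / (2 * (K₁ * |w|)) :=
          div_le_div₀ (by positivity) hnum (by positivity) hden2
    _ = B * s := by rw [hB]; field_simp
  have hzhalf : ‖z‖ ≤ 1 / 2 := le_trans hznorm hBs
  have hlogz : ‖Complex.log (1 + z) - z‖ ≤ ‖z‖ ^ 2 := by
    have hlt : ‖z‖ < 1 := lt_of_le_of_lt hzhalf (by norm_num)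
    have h1 := Complex.norm_log_one_add_sub_self_le hlt
    have h2 : (1 - ‖z‖)⁻¹ ≤ 2 := by
      rw [inv_le_comm₀ (by linarith) (by norm_num)]
      linarith
    calc ‖Complex.log (1 + z) - z‖ ≤ ‖z‖ ^ 2 * (1 - ‖z‖)⁻¹ / 2 := h1
    _ ≤ ‖z‖ ^ 2 * 2 / 2 := by gcongr
    _ = ‖z‖ ^ 2 := by ring
  -- the key cancellation identity
  have hSid : (m - d) * (τ : ℂ) - 2 * Complex.log (1 + z)
      = (m - d) / d * (ecx - 1 + d * (τ : ℂ)) - 2 * (Complex.log (1 + z) - z) := by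
    rw [hz_def]
    field_simp
    ring
  have hmdd : ‖(m - d) / d‖ ≤ B := by
    rw [norm_div, ← hδ]
    calc ‖m - d‖ / δ ≤ ((κ + ξ + K₂) * |w|) / (K₁ * |w|) :=
      div_le_div₀ (by positivity) hmd_norm (by positivity) hδge
    _ = B := by rw [hB]; field_simp
  have hzsq : ‖z‖ ^ 2 ≤ (B * s) ^ 2 := pow_le_pow_left₀ (norm_nonneg z) hznorm 2
  have hS : ‖(m - d) * (τ : ℂ) - 2 * Complex.log (1 + z)‖ ≤ (B + 2 * B ^ 2) * s ^ 2 := by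
    rw [hSid]
    calc ‖(m - d) / d * (ecx - 1 + d * (τ : ℂ)) - 2 * (Complex.log (1 + z) - z)‖
        ≤ ‖(m - d) / d * (ecx - 1 + d * (τ : ℂ))‖ + ‖(2 : ℂ) * (Complex.log (1 + z) - z)‖ :=
          norm_sub_le _ _
    _ ≤ B * s ^ 2 + 2 * (B * s) ^ 2 := by
        rw [norm_mul, norm_mul]
        apply add_le_add
        · exact mul_le_mul hmdd hEexp (norm_nonneg _) hBpos.le
        · have h2 : ‖(2 : ℂ)‖ = 2 := by norm_num
          rw [h2]
          have h3 : ‖Complex.log (1 + z) - z‖ ≤ (B * s) ^ 2 := le_trans hlogz hzsq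
          linarith
    _ = (B + 2 * B ^ 2) * s ^ 2 := by ring
  -- assemble
  have hAeq : hestA κ θ ρ ξ ((w : ℝ) : ℂ) τ
      = ((κ * θ / ξ ^ 2 : ℝ) : ℂ) * ((m - d) * (τ : ℂ) - 2 * Complex.log (1 + z)) := by
    rw [hestA, ← hd_def, ← hm_def, hγ]
    have harg : -d * (τ : ℂ) = -d * (τ : ℂ) := rfl
    rw [← he_def, hQ]
  rw [hAeq, norm_mul, Complex.norm_real, Real.norm_eq_abs]
  have hs2 : s ^ 2 ≤ (K₂ * (|w| * τ)) ^ 2 := pow_le_pow_left₀ hsnn hsK 2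
  calc |κ * θ / ξ ^ 2| * ‖(m - d) * (τ : ℂ) - 2 * Complex.log (1 + z)‖
      ≤ |κ * θ / ξ ^ 2| * ((B + 2 * B ^ 2) * s ^ 2) :=
        mul_le_mul_of_nonneg_left hS (abs_nonneg _)
  _ ≤ |κ * θ / ξ ^ 2| * ((B + 2 * B ^ 2) * (K₂ * (|w| * τ)) ^ 2) := by
      apply mul_le_mul_of_nonneg_left _ (abs_nonneg _)
      apply mul_le_mul_of_nonneg_left hs2 (by positivity)
  _ = M * (|w| * τ) ^ 2 := by rw [hM]; ring

theorem stmt6 (κ θ ξ v ρ t : ℝ) (hκ : 0 < κ) (hθ : 0 < θ) (hξ : 0 < ξ)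
    (hv : 0 < v) (hρ : ρ ∈ Set.Ioo (-1 : ℝ) 1) (ht : 0 < t)
    (h : ℝ → ℝ) (hpos : ∀ τ ∈ Set.Ioi (0 : ℝ), 0 < h τ)
    (hcont : ContinuousOn h (Set.Ioi 0))
    (hlim : Tendsto h (𝓝[>] (0 : ℝ)) (𝓝 0))
    (hrat : Tendsto (fun τ : ℝ => τ / h τ) (𝓝[>] (0 : ℝ)) (𝓝 0))
    (u : ℝ) (hu : u ≠ 0) :
    (fun τ : ℝ => hestA κ θ ρ ξ ((u : ℂ) / ((h τ : ℝ) : ℂ)) τ)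
      =O[𝓝[>] (0 : ℝ)] fun τ : ℝ => (τ / h τ) ^ 2 := by
  obtain ⟨W₀, hW₀1, ε, hεpos, M, hMpos, hbound⟩ := hest_core κ θ ξ ρ hκ hθ hξ hρ
  have hW₀pos : 0 < W₀ := lt_of_lt_of_le one_pos hW₀1
  have hu' : 0 < |u| := abs_pos.mpr hu
  rw [Asymptotics.isBigO_iff]
  refine ⟨M * u ^ 2, ?_⟩
  have ev1 : ∀ᶠ τ in 𝓝[>] (0 : ℝ), τ ∈ Set.Ioi (0 : ℝ) := eventually_mem_nhdsWithin
  have ev2 : ∀ᶠ τ in 𝓝[>] (0 : ℝ), h τ < |u| / W₀ :=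
    hlim.eventually_lt_const (by positivity)
  have ev3 : ∀ᶠ τ in 𝓝[>] (0 : ℝ), τ / h τ < ε / |u| :=
    hrat.eventually_lt_const (by positivity)
  filter_upwards [ev1, ev2, ev3] with τ hτ h2 h3
  have hτ0 : 0 < τ := hτ
  have hh : 0 < h τ := hpos τ hτ
  have hcast : (u : ℂ) / ((h τ : ℝ) : ℂ) = ((u / h τ : ℝ) : ℂ) := by push_cast; ring
  rw [hcast]
  have habs : |u / h τ| = |u| / h τ := by rw [abs_div, abs_of_pos hh]
  have hWle : W₀ ≤ |u / h τ| := by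
    rw [habs, le_div_iff₀ hh]
    have h4 : h τ * W₀ < |u| := (lt_div_iff₀ hW₀pos).mp h2
    linarith
  have hwτ : |u / h τ| * τ ≤ ε := by
    rw [habs]
    have heq : |u| / h τ * τ = |u| * (τ / h τ) := by ring
    rw [heq]
    calc |u| * (τ / h τ) ≤ |u| * (ε / |u|) := mul_le_mul_of_nonneg_left h3.le (abs_nonneg u)
    _ = ε := by field_simp
  have hb := hbound (u / h τ) τ hτ0 hWle hwτ
  rw [Real.norm_eq_abs]
  calc ‖hestA κ θ ρ ξ ((u / h τ : ℝ) : ℂ) τ‖ ≤ M * (|u / h τ| * τ) ^ 2 := hb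
  _ = M * u ^ 2 * (τ / h τ) ^ 2 := by
      rw [habs, ← sq_abs u]; ring
  _ = M * u ^ 2 * |(τ / h τ) ^ 2| := by rw [abs_of_nonneg (sq_nonneg _)]


end
end

section
/- Fix a real u ≠ 0. Then, as x → 0+, the following expansions hold in ℂ: d(u/x) = (i·u·d₀)/x + d₁ + O(x) and γ(u/x) = g₀ − (i·x/u)·g₁ + O(x²), where d₀ := ρ̄·ξ·sgn(u), d₁ := i·(2κρ − ξ)·sgn(u)/(2ρ̄), g₀ := (iρ − ρ̄·sgn(u))/(iρ + ρ̄·sgn(u)), and g₁ := (2κ − ρξ)·sgn(u)/(ξ·ρ̄·(ρ̄ + iρ·sgn(u))²). -/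
open Filter Topology Asymptotics MeasureTheory

set_option linter.unusedVariables false

noncomputable section


set_option maxHeartbeats 1000000

lemma cpow_half_neg (z : ℝ) (hz : z < 0) :
    (z : ℂ) ^ ((1:ℂ)/2) = Complex.I * (Real.sqrt (-z) : ℝ) := by
  have hz0 : (z : ℂ) ≠ 0 := by exact_mod_cast hz.ne
  rw [Complex.cpow_def_of_ne_zero hz0, Complex.log]
  rw [Complex.arg_ofReal_of_neg hz, Complex.norm_real, Real.norm_eq_abs, abs_of_neg hz]
  have : ((Real.log (-z) : ℂ) + ↑Real.pi * Complex.I) * (1/2)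
      = (↑(Real.log (-z) / 2) : ℂ) + (↑(Real.pi/2) : ℝ) * Complex.I := by
    push_cast; ring
  rw [this, Complex.exp_add, Complex.exp_mul_I]
  rw [← Complex.ofReal_exp, ← Complex.ofReal_cos, ← Complex.ofReal_sin,
    Real.cos_pi_div_two, Real.sin_pi_div_two]
  rw [Real.sqrt_eq_rpow, Real.rpow_def_of_pos (by linarith)]
  push_cast; ring

lemma hestRadReal (κ ρ ξ u x r s : ℝ) (hx : x ≠ 0) (hu : u ≠ 0) (hr : r ≠ 0) (hξ : ξ ≠ 0)
    (hs2 : s^2 = 1) (hr2 : r^2 = 1 - ρ^2) :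
    -((r * ξ * (s * u))/x)^2 * (1 + ((2*κ*ρ - ξ) / (r^2 * ξ * u))*x + (-κ^2 / (r^2 * ξ^2 * u^2))*x^2)
      = κ^2 + (ξ^2 - 2*κ*ρ*ξ)*(u/x) - (1-ρ^2)*ξ^2*(u/x)^2 := by
  field_simp
  have hr2' : r^2 ≠ 0 := pow_ne_zero 2 hr
  grind

lemma hestRadC (κ ρ ξ u x z : ℝ) (hx : (x:ℂ) ≠ 0)
    (hz : z = κ^2 + (ξ^2 - 2*κ*ρ*ξ)*(u/x) - (1-ρ^2)*ξ^2*(u/x)^2) :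
    (((κ : ℂ) - (ρ : ℂ) * (ξ : ℂ) * ((u:ℂ)/(x:ℂ))) ^ 2
        + ((u:ℂ)/(x:ℂ)) * (1 - ((u:ℂ)/(x:ℂ))) * (ξ : ℂ) ^ 2) = ((z:ℝ):ℂ) := by
  rw [hz]; push_cast; field_simp; ring

lemma hestId1 (ρ ξ u r s : ℝ)
    (hden1 : Complex.I*(ρ:ℂ) + ((r*s:ℝ):ℂ) ≠ 0) :
    (-(((ρ:ℝ):ℂ)*(ξ:ℂ)*(u:ℂ)) - Complex.I*((r*ξ*(s*u) : ℝ):ℂ))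
      = (Complex.I*(ρ:ℂ) - ((r*s:ℝ):ℂ)) / (Complex.I*(ρ:ℂ) + ((r*s:ℝ):ℂ))
        * (-(((ρ:ℝ):ℂ)*(ξ:ℂ)*(u:ℂ)) + Complex.I*((r*ξ*(s*u) : ℝ):ℂ)) := by
  rw [div_mul_eq_mul_div, eq_div_iff hden1]
  push_cast
  linear_combination (-2*(ρ:ℂ)*(r:ℂ)*(ξ:ℂ)*(s:ℂ)*(u:ℂ)) * Complex.I_sq

lemma hestId2 (κ ρ ξ u r s : ℝ) (hu : u ≠ 0) (hr : 0 < r) (hξ : ξ ≠ 0)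
    (hs2 : s^2 = 1) (hr2 : r^2 = 1 - ρ^2)
    (hden1 : Complex.I*(ρ:ℂ) + ((r*s:ℝ):ℂ) ≠ 0)
    (hden2 : ((r:ℝ):ℂ) + Complex.I*(ρ:ℂ)*((s:ℝ):ℂ) ≠ 0) :
    ((κ:ℂ) - Complex.I*(((s*(2*κ*ρ-ξ)/r : ℝ)):ℂ)/2)
      - (Complex.I*(ρ:ℂ) - ((r*s:ℝ):ℂ)) / (Complex.I*(ρ:ℂ) + ((r*s:ℝ):ℂ))
        * ((κ:ℂ) + Complex.I*(((s*(2*κ*ρ-ξ)/r : ℝ)):ℂ)/2)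
    = (-(Complex.I * ((((2*κ-ρ*ξ)*s : ℝ):ℂ)/(((ξ*r : ℝ):ℂ)*(((r:ℝ):ℂ) + Complex.I*(ρ:ℂ)*((s:ℝ):ℂ))^2)) / (u:ℂ)))
        * (-(((ρ:ℝ):ℂ)*(ξ:ℂ)*(u:ℂ)) + Complex.I*((r*ξ*(s*u) : ℝ):ℂ)) := by
  have hs2C : ((s:ℝ):ℂ)^2 = 1 := by exact_mod_cast hs2
  have hr2C : ((r:ℝ):ℂ)^2 = 1 - (ρ:ℂ)^2 := by exact_mod_cast hr2
  have huC : (u:ℂ) ≠ 0 := by exact_mod_cast hu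
  have hrC : (r:ℂ) ≠ 0 := by exact_mod_cast hr.ne'
  have hξC : (ξ:ℂ) ≠ 0 := by exact_mod_cast hξ
  push_cast at hden1 hden2 ⊢
  have hden1' : (r:ℂ)*s + Complex.I*ρ ≠ 0 := by rwa [add_comm]
  have hI : Complex.I^2 = -1 := Complex.I_sq
  have hd3 : Complex.I*(ρ:ℂ) + (s:ℂ)*r ≠ 0 := by rwa [mul_comm (s:ℂ)]
  have hd4 : ((r:ℂ) + Complex.I*s*ρ)^2 ≠ 0 := pow_ne_zero 2 (by rwa [mul_right_comm])
  field_simp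
  grind

theorem stmt7 (κ θ ξ v ρ : ℝ) (hκ : 0 < κ) (hθ : 0 < θ) (hξ : 0 < ξ)
    (hv : 0 < v) (hρ : ρ ∈ Set.Ioo (-1 : ℝ) 1)
    (u : ℝ) (hu : u ≠ 0) :
    ((fun x : ℝ => hestD κ ρ ξ ((u : ℂ) / (x : ℂ)) -
        (Complex.I * (u : ℂ) * ((Real.sqrt (1 - ρ ^ 2) * ξ * sgn' u : ℝ) : ℂ) / (x : ℂ) +
          Complex.I * (((2 * κ * ρ - ξ) * sgn' u / (2 * Real.sqrt (1 - ρ ^ 2)) : ℝ) : ℂ)))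
      =O[𝓝[>] (0 : ℝ)] fun x : ℝ => x) ∧
    ((fun x : ℝ => hestGamma κ ρ ξ ((u : ℂ) / (x : ℂ)) -
        ((Complex.I * (ρ : ℂ) - ((Real.sqrt (1 - ρ ^ 2) * sgn' u : ℝ) : ℂ)) /
            (Complex.I * (ρ : ℂ) + ((Real.sqrt (1 - ρ ^ 2) * sgn' u : ℝ) : ℂ)) -
          Complex.I * (x : ℂ) / (u : ℂ) *
            ((((2 * κ - ρ * ξ) * sgn' u : ℝ) : ℂ) /
              (((ξ * Real.sqrt (1 - ρ ^ 2) : ℝ) : ℂ) *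
                (((Real.sqrt (1 - ρ ^ 2) : ℝ) : ℂ) +
                  Complex.I * (ρ : ℂ) * ((sgn' u : ℝ) : ℂ)) ^ 2))))
      =O[𝓝[>] (0 : ℝ)] fun x : ℝ => x ^ 2) := by
  have hρ2 : (0:ℝ) < 1 - ρ^2 := by nlinarith [hρ.1, hρ.2]
  set s : ℝ := sgn' u with hsdef
  have hs : s = 1 ∨ s = -1 := by rw [hsdef]; unfold sgn'; split <;> simp
  have hs2 : s^2 = 1 := by rcases hs with h | h <;> rw [h] <;> norm_num
  have hsu : 0 < s * u := by
    rw [hsdef]; unfold sgn'; rcases lt_or_ge u 0 with h | h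
    · rw [if_neg (by linarith)]; nlinarith
    · rw [if_pos h]; nlinarith [lt_of_le_of_ne h (Ne.symm hu)]
  set r : ℝ := Real.sqrt (1 - ρ^2) with hrdef
  have hr : 0 < r := Real.sqrt_pos.mpr hρ2
  have hr2 : r^2 = 1 - ρ^2 := Real.sq_sqrt hρ2.le
  have hrs : r * s ≠ 0 := by rcases hs with h | h <;> rw [h] <;> simp [hr.ne']
  have huC : (u:ℂ) ≠ 0 := by exact_mod_cast hu
  set C : ℝ := r * ξ * (s * u) with hCdef
  have hC : 0 < C := by rw [hCdef]; positivity
  set c : ℝ := (2*κ*ρ - ξ) / (r^2 * ξ * u) with hcdef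
  set e : ℝ := -κ^2 / (r^2 * ξ^2 * u^2) with hedef
  set A : ℝ → ℝ := fun x => 1 + c*x + e*x^2 with hAdef
  set S : ℝ → ℝ := fun x => Real.sqrt (A x) with hSdef
  set R : ℝ → ℝ := fun x => S x - 1 - c*x/2 with hRdef
  have hCc : C * c = s*(2*κ*ρ-ξ)/r := by
    rw [hCdef, hcdef]; field_simp
  have hl0 : ∀ᶠ x in 𝓝[>] (0:ℝ), 0 < x := self_mem_nhdsWithin
  -- tendsto lemmas
  have hAt : Filter.Tendsto A (𝓝[>] (0:ℝ)) (𝓝 1) := by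
    have : Filter.Tendsto A (𝓝 (0:ℝ)) (𝓝 (A 0)) := by
      apply Continuous.tendsto; rw [hAdef]; continuity
    rw [hAdef] at this; norm_num at this
    exact (by rw [hAdef]; exact this : Filter.Tendsto A (𝓝 (0:ℝ)) (𝓝 1)).mono_left
      nhdsWithin_le_nhds
  have hSt : Filter.Tendsto S (𝓝[>] (0:ℝ)) (𝓝 1) := by
    have := (Real.continuous_sqrt.tendsto 1).comp hAt
    rw [Real.sqrt_one] at this
    exact this
  have hApos : ∀ᶠ x in 𝓝[>] (0:ℝ), 0 < A x :=
    hAt.eventually (eventually_gt_nhds one_pos)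
  have hShalf : ∀ᶠ x in 𝓝[>] (0:ℝ), (1:ℝ)/2 < S x :=
    hSt.eventually (eventually_gt_nhds (by norm_num))
  have hcx : ∀ᶠ x in 𝓝[>] (0:ℝ), (1:ℝ)/2 < 1 + c*x/2 := by
    have : Filter.Tendsto (fun x : ℝ => 1 + c*x/2) (𝓝[>] (0:ℝ)) (𝓝 1) := by
      have : Filter.Tendsto (fun x : ℝ => 1 + c*x/2) (𝓝 (0:ℝ)) (𝓝 (1 + c*0/2)) := by
        apply Continuous.tendsto; continuity
      norm_num at this; exact this.mono_left nhdsWithin_le_nhds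
    exact this.eventually (eventually_gt_nhds (by norm_num))
  -- the key formula for hestD
  have hD : ∀ᶠ x in 𝓝[>] (0:ℝ), 0 < A x →
      hestD κ ρ ξ ((u:ℂ)/(x:ℂ)) = Complex.I * ((C/x * S x : ℝ) : ℂ) := by
    filter_upwards [hl0] with x hx hA
    have hxC : (x:ℂ) ≠ 0 := by exact_mod_cast hx.ne'
    unfold hestD
    rw [hestRadC κ ρ ξ u x (-(C/x)^2 * A x) hxC (by
      rw [hCdef, hAdef, hcdef, hedef]
      exact hestRadReal κ ρ ξ u x r s hx.ne' hu hr.ne' hξ.ne' hs2 hr2)]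
    have hzneg : -(C/x)^2 * A x < 0 := by
      have h1 : 0 < (C/x)^2 := pow_pos (div_pos hC hx) 2
      nlinarith [mul_pos h1 hA]
    rw [cpow_half_neg _ hzneg]
    congr 2
    rw [show -(-(C / x) ^ 2 * A x) = (C/x)^2 * A x by ring]
    rw [Real.sqrt_mul (sq_nonneg _), Real.sqrt_sq (div_pos hC hx).le]
  -- remainder bound for R
  have hRw : ∀ᶠ x in 𝓝[>] (0:ℝ), |R x| ≤ |e - c^2/4| * x^2 := by
    filter_upwards [hApos, hShalf, hcx] with x hA hSh hcxh
    have hS2 : S x ^ 2 = A x := Real.sq_sqrt hA.le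
    simp only [hAdef] at hS2
    have hw : 1 ≤ S x + (1 + c*x/2) := by linarith
    have hprod : R x * (S x + (1 + c*x/2)) = (e - c^2/4) * x^2 := by
      simp only [hRdef]
      linear_combination hS2
    calc |R x| = |R x| * 1 := (mul_one _).symm
      _ ≤ |R x| * (S x + (1 + c*x/2)) := mul_le_mul_of_nonneg_left hw (abs_nonneg _)
      _ = |R x * (S x + (1 + c*x/2))| := by
          rw [abs_mul, abs_of_nonneg (show (0:ℝ) ≤ S x + (1 + c*x/2) by linarith)]
      _ = |(e - c^2/4) * x^2| := by rw [hprod]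
      _ ≤ |e - c^2/4| * x^2 := by rw [abs_mul, abs_pow, sq_abs]
  constructor
  · -- Claim 1
    rw [Asymptotics.isBigO_iff]
    refine ⟨C * |e - c^2/4|, ?_⟩
    filter_upwards [hl0, hApos, hD, hRw] with x hx hA hDx hRx
    rw [hDx hA]
    have hreal : C/x * S x - (u*(r*ξ*s)/x + (2*κ*ρ-ξ)*s/(2*r)) = C * R x / x := by
      have h1 : u*(r*ξ*s) = C := by rw [hCdef]; ring
      have h2 : (2*κ*ρ-ξ)*s/(2*r) = C*c/2 := by linear_combination -hCc/2
      simp only [hRdef]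
      rw [h1, h2]
      field_simp
      ring
    have key : Complex.I * ((C/x * S x : ℝ):ℂ) -
        (Complex.I * (u:ℂ) * ((r*ξ*s : ℝ):ℂ) / (x:ℂ) + Complex.I * (((2*κ*ρ-ξ)*s/(2*r) : ℝ):ℂ))
        = Complex.I * ((C * R x / x : ℝ):ℂ) := by
      have := congrArg (fun t : ℝ => Complex.I * (t:ℂ)) hreal
      rw [← this]
      push_cast
      ring
    rw [key]
    rw [norm_mul, Complex.norm_I, one_mul, Complex.norm_real, Real.norm_eq_abs,
      Real.norm_eq_abs, abs_of_pos hx, abs_div, abs_mul, abs_of_pos hC, abs_of_pos hx]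
    rw [div_le_iff₀ hx]
    calc C * |R x| ≤ C * (|e - c^2/4| * x^2) := mul_le_mul_of_nonneg_left hRx hC.le
      _ = C * |e - c^2/4| * x * x := by ring
  · -- Claim 2
    set g0 : ℂ := (Complex.I*(ρ:ℂ) - ((r*s : ℝ):ℂ)) / (Complex.I*(ρ:ℂ) + ((r*s:ℝ):ℂ)) with hg0def
    set g1 : ℂ := (((2*κ-ρ*ξ)*s:ℝ):ℂ)/(((ξ*r:ℝ):ℂ)*(((r:ℝ):ℂ) + Complex.I*(ρ:ℂ)*((s:ℝ):ℂ))^2) with hg1def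
    set lam : ℂ := -(Complex.I * g1 / (u:ℂ)) with hlamdef
    set be : ℂ := (κ:ℂ) + Complex.I*(((s*(2*κ*ρ-ξ)/r : ℝ)):ℂ)/2 with hbedef
    set qq : ℂ := -(((ρ:ℝ):ℂ)*((ξ:ℝ):ℂ)*((u:ℝ):ℂ)) + Complex.I*((r*ξ*(s*u) : ℝ):ℂ) with hqqdef
    set N : ℝ → ℂ := fun x => ((κ*x:ℝ):ℂ) - ((ρ*ξ*u:ℝ):ℂ) - Complex.I*((C*S x:ℝ):ℂ) with hNdef
    set D : ℝ → ℂ := fun x => ((κ*x:ℝ):ℂ) - ((ρ*ξ*u:ℝ):ℂ) + Complex.I*((C*S x:ℝ):ℂ) with hDdef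
    have hd1 : Complex.I*(ρ:ℂ) + ((r*s:ℝ):ℂ) ≠ 0 := by
      intro h
      have h2 := congrArg Complex.re h
      simp at h2
      exact hrs (mul_eq_zero.mpr h2)
    have hd2 : ((r:ℝ):ℂ) + Complex.I*(ρ:ℂ)*((s:ℝ):ℂ) ≠ 0 := by
      intro h
      have h2 := congrArg Complex.re h
      simp at h2
      exact hr.ne' h2
    have hq0 : qq ≠ 0 := by
      rw [hqqdef]
      intro h
      have h2 := congrArg Complex.im h
      simp at h2
      rcases h2 with (h2|h2) | h2|h2
      · exact hr.ne' h2
      · exact hξ.ne' h2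
      · rcases hs with h3|h3 <;> rw [h3] at h2 <;> norm_num at h2
      · exact hu h2
    have hEid : ∀ x : ℝ, N x - (g0 + lam*(x:ℂ)) * D x
        = -(lam*be)*(x:ℂ)^2 - Complex.I*((C:ℝ):ℂ)*((R x:ℝ):ℂ)*(1 + g0 + lam*(x:ℂ)) := by
      intro x
      have hCS : C * S x = C + (s*(2*κ*ρ-ξ)/r)*(x/2) + C*R x := by
        simp only [hRdef]
        linear_combination x/2 * hCc
      have Id1 := hestId1 ρ ξ u r s hd1
      have Id2 := hestId2 κ ρ ξ u r s hu hr hξ.ne' hs2 hr2 hd1 hd2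
      simp only [hNdef, hDdef, hg0def, hlamdef, hg1def, hbedef]
      rw [show ((C*S x : ℝ):ℂ) = ((C + (s*(2*κ*ρ-ξ)/r)*(x/2) + C*R x : ℝ):ℂ) from by
        exact_mod_cast congrArg Complex.ofReal hCS]
      rw [hCdef]
      push_cast
      push_cast at Id1 Id2
      linear_combination Id1 + (x:ℂ) * Id2
    have hDne : ∀ᶠ x : ℝ in 𝓝[>] (0:ℝ), D x ≠ 0 := by
      filter_upwards [hShalf] with x hSh
      simp only [hDdef]
      intro h
      have h2 := congrArg Complex.im h
      simp at h2
      rcases h2 with h2|h2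
      · exact hC.ne' h2
      · linarith
    have hgam : ∀ᶠ x : ℝ in 𝓝[>] (0:ℝ), hestGamma κ ρ ξ ((u:ℂ)/(x:ℂ)) = N x / D x := by
      filter_upwards [hl0, hApos, hD] with x hx hA hDx
      have hxC : (x:ℂ) ≠ 0 := by exact_mod_cast hx.ne'
      unfold hestGamma
      rw [hDx hA]
      have hNx : N x = (x:ℂ) * ((κ:ℂ) - (ρ:ℂ)*(ξ:ℂ)*((u:ℂ)/(x:ℂ)) - Complex.I*((C/x*S x:ℝ):ℂ)) := by
        simp only [hNdef]; push_cast; field_simp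
      have hDxx : D x = (x:ℂ) * ((κ:ℂ) - (ρ:ℂ)*(ξ:ℂ)*((u:ℂ)/(x:ℂ)) + Complex.I*((C/x*S x:ℝ):ℂ)) := by
        simp only [hDdef]; push_cast; field_simp
      rw [hNx, hDxx, mul_div_mul_left _ _ hxC]
    have hEq : (fun x : ℝ => hestGamma κ ρ ξ ((u:ℂ)/(x:ℂ)) - (g0 - Complex.I*(x:ℂ)/(u:ℂ)*g1))
        =ᶠ[𝓝[>] (0:ℝ)] (fun x => (-(lam*be)*(x:ℂ)^2
          - Complex.I*((C:ℝ):ℂ)*((R x:ℝ):ℂ)*(1 + g0 + lam*(x:ℂ))) * (D x)⁻¹) := by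
      filter_upwards [hgam, hDne] with x hg hD0
      rw [hg]
      have h1 : g0 - Complex.I*(x:ℂ)/(u:ℂ)*g1 = g0 + lam*(x:ℂ) := by rw [hlamdef]; ring
      rw [h1]
      have h2 : N x / D x - (g0 + lam*(x:ℂ)) = (N x - (g0 + lam*(x:ℂ)) * D x) * (D x)⁻¹ := by
        field_simp
      rw [h2, hEid x]
    refine hEq.trans_isBigO ?_
    have hk0 : Filter.Tendsto (fun x:ℝ => ((κ*x : ℝ):ℂ)) (𝓝[>] (0:ℝ)) (𝓝 0) := by
      have h1 : Filter.Tendsto (fun x:ℝ => κ*x) (𝓝 (0:ℝ)) (𝓝 (κ*0)) :=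
        (continuous_const.mul continuous_id).tendsto 0
      rw [mul_zero] at h1
      have h2 : Filter.Tendsto (fun x:ℝ => ((κ*x:ℝ):ℂ)) (𝓝[>] (0:ℝ)) (𝓝 ((0:ℝ):ℂ)) :=
        (Complex.continuous_ofReal.tendsto 0).comp (h1.mono_left nhdsWithin_le_nhds)
      simpa using h2
    have hCSt : Filter.Tendsto (fun x:ℝ => ((C*S x : ℝ):ℂ)) (𝓝[>] (0:ℝ)) (𝓝 (C:ℂ)) := by
      have h1 : Filter.Tendsto (fun x:ℝ => C * S x) (𝓝[>] (0:ℝ)) (𝓝 (C*1)) :=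
        tendsto_const_nhds.mul hSt
      rw [mul_one] at h1
      exact (Complex.continuous_ofReal.tendsto C).comp h1
    have hDt : Filter.Tendsto D (𝓝[>] (0:ℝ)) (𝓝 qq) := by
      have h1 := (hk0.sub (tendsto_const_nhds (x := ((ρ*ξ*u:ℝ):ℂ)))).add
        ((tendsto_const_nhds (x := Complex.I)).mul hCSt)
      have heq : qq = 0 - ((ρ*ξ*u:ℝ):ℂ) + Complex.I*((C:ℝ):ℂ) := by
        rw [hqqdef, hCdef]; push_cast; ring
      rw [heq]
      exact h1
    have hDinvO : (fun x => (D x)⁻¹) =O[𝓝[>] (0:ℝ)] (fun _ : ℝ => (1:ℝ)) :=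
      (hDt.inv₀ hq0).isBigO_one ℝ
    have hRO : (fun x:ℝ => ((R x : ℝ):ℂ)) =O[𝓝[>] (0:ℝ)] (fun x => x^2) := by
      rw [Asymptotics.isBigO_iff]
      refine ⟨|e - c^2/4|, ?_⟩
      filter_upwards [hRw] with x hx
      simp only [Complex.norm_real, Real.norm_eq_abs, abs_pow, sq_abs]
      exact hx
    have hxsqO : (fun x:ℝ => ((x:ℂ))^2) =O[𝓝[>] (0:ℝ)] (fun x => x^2) := by
      apply Asymptotics.isBigO_of_le
      intro x
      simp [Complex.norm_real, Real.norm_eq_abs, abs_pow]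
    have hconstO : (fun x:ℝ => 1 + g0 + lam*(x:ℂ)) =O[𝓝[>] (0:ℝ)] (fun _ : ℝ => (1:ℝ)) := by
      have h1 : Filter.Tendsto (fun x:ℝ => 1 + g0 + lam*(x:ℂ)) (𝓝[>] (0:ℝ)) (𝓝 (1 + g0 + lam*((0:ℝ):ℂ))) := by
        apply Filter.Tendsto.mono_left _ nhdsWithin_le_nhds
        have hcont : Continuous (fun x:ℝ => 1 + g0 + lam*(x:ℂ)) := by continuity
        exact hcont.tendsto 0
      exact h1.isBigO_one ℝ
    have t1 : (fun x:ℝ => -(lam*be)*(x:ℂ)^2) =O[𝓝[>] (0:ℝ)] (fun x => x^2) :=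
      hxsqO.const_mul_left (-(lam*be))
    have t2 : (fun x:ℝ => Complex.I*((C:ℝ):ℂ)*((R x:ℝ):ℂ)*(1 + g0 + lam*(x:ℂ)))
        =O[𝓝[>] (0:ℝ)] (fun x => x^2) := by
      have h3 := (hRO.const_mul_left (Complex.I*((C:ℝ):ℂ))).mul hconstO
      simpa [mul_assoc] using h3
    have hEO := (t1.sub t2).mul hDinvO
    simpa using hEO

end
end
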